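/- (Tall skinny CSD) Let n = p + q with p ≥ q ≥ s and n ≥ s. Any n×s real matrix O with orthonormal columns (OᵀO = I_s) can be written as O = [[O_p C O_s], [O_q S O_s]] where O_p ∈ O(p), O_q ∈ O(q), O_s ∈ O(s), and C ∈ ℝ^{p×s}, S ∈ ℝ^{q×s} are (rectangular) diagonal matrices with entries cos θ_l and sin θ_l respectively, for angles θ_1, …, θ_s. -/

import Mathlib

open Matrix

lemma mulVec_dot_self {p s : ℕ} (M : Matrix (Fin p) (Fin s) ℝ) (x : Fin s → ℝ) :
    (M *ᵥ x) ⬝ᵥ (M *ᵥ x) = x ⬝ᵥ ((Mᵀ * M) *ᵥ x) := by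
  rw [← mulVec_mulVec, mulVec_transpose, dotProduct_mulVec, dotProduct_comm]

lemma norm_sq_toEuclideanLin {p s : ℕ} (M : Matrix (Fin p) (Fin s) ℝ)
    (x : EuclideanSpace ℝ (Fin s)) :
    ‖toEuclideanLin M x‖ ^ 2 =
      (WithLp.equiv 2 _ x) ⬝ᵥ ((Mᵀ * M) *ᵥ (WithLp.equiv 2 _ x)) := by
  rw [← real_inner_self_eq_norm_sq, ← mulVec_dot_self]
  simp [toEuclideanLin_apply, PiLp.inner_apply, RCLike.inner_apply, dotProduct]
  rw [EuclideanSpace.norm_sq_eq]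
  simp [sq]

set_option maxHeartbeats 1000000 in
lemma gram_factor {p s : ℕ} (A B : Matrix (Fin p) (Fin s) ℝ)
    (h : Aᵀ * A = Bᵀ * B) :
    ∃ U : Matrix (Fin p) (Fin p) ℝ, Uᵀ * U = 1 ∧ A = U * B := by
  have hnorm : ∀ x : EuclideanSpace ℝ (Fin s),
      ‖toEuclideanLin A x‖ = ‖toEuclideanLin B x‖ := by
    intro x
    have := congrArg (fun M => (WithLp.equiv 2 _ x) ⬝ᵥ (M *ᵥ (WithLp.equiv 2 _ x))) h
    rw [← norm_sq_toEuclideanLin, ← norm_sq_toEuclideanLin] at this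
    nlinarith [norm_nonneg (toEuclideanLin A x), norm_nonneg (toEuclideanLin B x)]
  have hker : LinearMap.ker (toEuclideanLin B) ≤ LinearMap.ker (toEuclideanLin A) := by
    intro x hx
    rw [LinearMap.mem_ker] at hx ⊢
    have := hnorm x
    rw [hx, norm_zero, norm_eq_zero] at this
    exact this
  let e := LinearMap.quotKerEquivRange (toEuclideanLin B)
  let g := (LinearMap.ker (toEuclideanLin B)).liftQ (toEuclideanLin A) hker
  let L0 : LinearMap.range (toEuclideanLin B) →ₗ[ℝ] EuclideanSpace ℝ (Fin p) :=
    g ∘ₗ e.symm.toLinearMap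
  have hL0 : ∀ x : EuclideanSpace ℝ (Fin s),
      L0 ⟨toEuclideanLin B x, LinearMap.mem_range_self _ x⟩ = toEuclideanLin A x := by
    intro x
    have h1 : e.symm ⟨toEuclideanLin B x, LinearMap.mem_range_self _ x⟩
        = (LinearMap.ker (toEuclideanLin B)).mkQ x :=
      LinearMap.quotKerEquivRange_symm_apply_image _ x _
    simp only [L0, LinearMap.coe_comp, Function.comp_apply, LinearEquiv.coe_coe, h1]
    exact Submodule.liftQ_apply _ _ x
  let L : LinearMap.range (toEuclideanLin B) →ₗᵢ[ℝ] EuclideanSpace ℝ (Fin p) :=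
    ⟨L0, by
      rintro ⟨y, x, rfl⟩
      rw [hL0 x, hnorm x]
      rfl⟩
  let Uiso := L.extend
  let U := Matrix.toEuclideanLin.symm Uiso.toLinearMap
  have hU' : Matrix.toEuclideanLin U = Uiso.toLinearMap :=
    LinearEquiv.apply_symm_apply _ _
  have hU : ∀ y, toEuclideanLin U y = Uiso y := fun y => by rw [hU']; rfl
  have hUB : ∀ x, toEuclideanLin A x = toEuclideanLin U (toEuclideanLin B x) := by
    intro x
    rw [hU]
    have h2 : Uiso (toEuclideanLin B x)
        = L ⟨toEuclideanLin B x, LinearMap.mem_range_self _ x⟩ :=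
      LinearIsometry.extend_apply L ⟨toEuclideanLin B x, LinearMap.mem_range_self _ x⟩
    rw [h2]
    exact (hL0 x).symm
  refine ⟨U, ?_, ?_⟩
  · ext i j
    have h2 : @inner ℝ _ _ (Uiso (EuclideanSpace.single i 1)) (Uiso (EuclideanSpace.single j 1))
        = (if i = j then (1:ℝ) else 0) := by
      rw [Uiso.inner_map_map]
      simp [EuclideanSpace.inner_single_left, EuclideanSpace.single_apply, eq_comm]
    have h3 : @inner ℝ _ _ (toEuclideanLin U (EuclideanSpace.single i 1))
        (toEuclideanLin U (EuclideanSpace.single j 1)) = ∑ k, U k i * U k j := by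
      simp [toEuclideanLin_apply, mulVec_single, PiLp.inner_apply,
        RCLike.inner_apply]
      exact Finset.sum_congr rfl fun k _ => mul_comm _ _
    rw [← hU, ← hU, h3] at h2
    simpa [mul_apply, one_apply] using h2
  · apply Matrix.toEuclideanLin.injective
    apply LinearMap.ext
    intro x
    rw [hUB]
    simp only [toEuclideanLin_apply, ← mulVec_mulVec, Equiv.apply_symm_apply]


lemma rect_diag_gram {p s : ℕ} (hsp : s ≤ p) (c : Fin s → ℝ) :
    (Matrix.of fun (a : Fin p) (b : Fin s) => if (a:ℕ) = (b:ℕ) then c b else 0)ᵀ *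
    (Matrix.of fun (a : Fin p) (b : Fin s) => if (a:ℕ) = (b:ℕ) then c b else 0)
    = Matrix.diagonal (fun i => c i ^ 2) := by
  ext b b'
  simp only [mul_apply, transpose_apply, of_apply, diagonal_apply]
  rw [Finset.sum_eq_single (Fin.castLE hsp b)]
  · simp only [Fin.coe_castLE]
    by_cases h : b = b'
    · subst h; simp [pow_two]
    · have h2 : ¬ ((b:ℕ) = (b':ℕ)) := fun hc => h (Fin.ext hc)
      simp [h, h2]
  · intro a _ ha
    have : ¬ ((a:ℕ) = (b:ℕ)) := fun hc => ha (Fin.ext hc)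
    simp [this]
  · simp

set_option maxHeartbeats 1000000 in
/-- Tall skinny CS decomposition: an `(p+q) × s` matrix with orthonormal columns
(`p ≥ q ≥ s`) splits as `[O_p C O_s ; O_q S O_s]` with rectangular diagonal
cosine/sine matrices `C`, `S`. -/
theorem tall_skinny_csd (p q s : ℕ) (hpq : q ≤ p) (hqs : s ≤ q)
    (O : Matrix (Fin p ⊕ Fin q) (Fin s) ℝ) (hO : Oᵀ * O = 1) :
    ∃ (Op : Matrix (Fin p) (Fin p) ℝ) (Oq : Matrix (Fin q) (Fin q) ℝ)
      (Os : Matrix (Fin s) (Fin s) ℝ) (θ : Fin s → ℝ),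
      Opᵀ * Op = 1 ∧ Oqᵀ * Oq = 1 ∧ Osᵀ * Os = 1 ∧
      (∀ i j, O (Sum.inl i) j =
        (Op * (Matrix.of fun (a : Fin p) (b : Fin s) =>
          if (a : ℕ) = (b : ℕ) then Real.cos (θ b) else 0) * Os) i j) ∧
      (∀ i j, O (Sum.inr i) j =
        (Oq * (Matrix.of fun (a : Fin q) (b : Fin s) =>
          if (a : ℕ) = (b : ℕ) then Real.sin (θ b) else 0) * Os) i j) := by
  classical
  set X : Matrix (Fin p) (Fin s) ℝ := Matrix.of fun i j => O (Sum.inl i) j with hX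
  set Y : Matrix (Fin q) (Fin s) ℝ := Matrix.of fun i j => O (Sum.inr i) j with hY
  have hsum : Xᵀ * X + Yᵀ * Y = 1 := by
    rw [← hO]
    ext a b
    simp [mul_apply, Fintype.sum_sum_type, X, Y]
  have hG : (Xᵀ * X).IsHermitian := by
    have := isHermitian_conjTranspose_mul_self X
    rwa [conjTranspose_eq_transpose_of_trivial] at this
  set d : Fin s → ℝ := hG.eigenvalues with hd
  set V : Matrix (Fin s) (Fin s) ℝ := (hG.eigenvectorUnitary : Matrix (Fin s) (Fin s) ℝ) with hV
  have hV1 : Vᵀ * V = 1 := by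
    have := Unitary.coe_star_mul_self hG.eigenvectorUnitary
    rwa [Matrix.star_eq_conjTranspose, conjTranspose_eq_transpose_of_trivial] at this
  have hV2 : V * Vᵀ = 1 := by
    have := Unitary.coe_mul_star_self hG.eigenvectorUnitary
    rwa [Unitary.coe_star, Matrix.star_eq_conjTranspose,
      conjTranspose_eq_transpose_of_trivial] at this
  have hspec : Xᵀ * X = V * diagonal d * Vᵀ := by
    have := hG.spectral_theorem
    rw [Unitary.conjStarAlgAut_apply] at this
    rwa [Matrix.star_eq_conjTranspose, conjTranspose_eq_transpose_of_trivial] at this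
  have h0d : ∀ i, 0 ≤ d i := by
    have hPSD := posSemidef_conjTranspose_mul_self (R := ℝ) X
    rw [conjTranspose_eq_transpose_of_trivial] at hPSD
    exact fun i => hPSD.eigenvalues_nonneg i
  have hYPSD : (1 - Xᵀ * X).PosSemidef := by
    have hPSD := posSemidef_conjTranspose_mul_self (R := ℝ) Y
    rw [conjTranspose_eq_transpose_of_trivial] at hPSD
    have : Yᵀ * Y = 1 - Xᵀ * X := by rw [← hsum]; abel
    rwa [this] at hPSD
  have hd1 : ∀ i, d i ≤ 1 := by
    intro i
    have h1 := hYPSD.dotProduct_mulVec_nonneg (WithLp.equiv 2 (Fin s → ℝ) (hG.eigenvectorBasis i))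
    have h2 := hG.eigenvalues_eq i
    have h3 : star ((WithLp.equiv 2 (Fin s → ℝ)) (hG.eigenvectorBasis i)) ⬝ᵥ
        (WithLp.equiv 2 (Fin s → ℝ)) (hG.eigenvectorBasis i) = (1:ℝ) := by
      have := hG.eigenvectorBasis.orthonormal.1 i
      have h4 : @inner ℝ _ _ (hG.eigenvectorBasis i) (hG.eigenvectorBasis i) = (1:ℝ) := by
        rw [real_inner_self_eq_norm_sq, this]; norm_num
      rw [← h4]
      simp [PiLp.inner_apply, RCLike.inner_apply, dotProduct]
      rw [← h4, PiLp.inner_apply]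
      simp [sq]
    rw [sub_mulVec, dotProduct_sub, one_mulVec, h3] at h1
    simp only [RCLike.re_to_real] at h1 h2
    rw [hd, h2]
    have h1' : 0 ≤ 1 - star (hG.eigenvectorBasis i).ofLp ⬝ᵥ
        (Xᵀ * X) *ᵥ (hG.eigenvectorBasis i).ofLp := h1
    linarith
  have hYX : Yᵀ * Y = 1 - Xᵀ * X := by rw [← hsum]; abel
  set θ : Fin s → ℝ := fun i => Real.arccos (Real.sqrt (d i)) with hθ
  have hcos : ∀ i, Real.cos (θ i) = Real.sqrt (d i) := fun i =>
    Real.cos_arccos (le_trans (by norm_num) (Real.sqrt_nonneg _)) (Real.sqrt_le_one.mpr (hd1 i))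
  have hcos2 : ∀ i, Real.cos (θ i) ^ 2 = d i := fun i => by
    rw [hcos, Real.sq_sqrt (h0d i)]
  have hsin2 : ∀ i, Real.sin (θ i) ^ 2 = 1 - d i := by
    intro i
    have hs : Real.sin (θ i) = Real.sqrt (1 - d i) := by
      rw [hθ]
      simp only []
      rw [Real.sin_arccos, Real.sq_sqrt (h0d i)]
    rw [hs, Real.sq_sqrt (by linarith [hd1 i])]
  set Cmat : Matrix (Fin p) (Fin s) ℝ := Matrix.of fun (a : Fin p) (b : Fin s) =>
    if (a : ℕ) = (b : ℕ) then Real.cos (θ b) else 0 with hCdef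
  set Smat : Matrix (Fin q) (Fin s) ℝ := Matrix.of fun (a : Fin q) (b : Fin s) =>
    if (a : ℕ) = (b : ℕ) then Real.sin (θ b) else 0 with hSdef
  have hCg : Cmatᵀ * Cmat = diagonal (fun i => Real.cos (θ i) ^ 2) :=
    rect_diag_gram (hqs.trans hpq) _
  have hSg : Smatᵀ * Smat = diagonal (fun i => Real.sin (θ i) ^ 2) :=
    rect_diag_gram hqs _
  have hmid : Vᵀ * (Xᵀ * X) * V = diagonal d := by
    rw [hspec]
    calc Vᵀ * (V * diagonal d * Vᵀ) * V = (Vᵀ * V) * diagonal d * (Vᵀ * V) := by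
          simp only [mul_assoc]
      _ = diagonal d := by rw [hV1, one_mul, mul_one]
  have hXVg : (X * V)ᵀ * (X * V) = Cmatᵀ * Cmat := by
    rw [hCg, transpose_mul]
    have h5 : Vᵀ * Xᵀ * (X * V) = Vᵀ * (Xᵀ * X) * V := by simp only [Matrix.mul_assoc]
    rw [h5, hmid]
    exact congrArg Matrix.diagonal (funext fun i => (hcos2 i).symm)
  have hYVg : (Y * V)ᵀ * (Y * V) = Smatᵀ * Smat := by
    rw [hSg, transpose_mul]
    have h5 : Vᵀ * Yᵀ * (Y * V) = Vᵀ * (Yᵀ * Y) * V := by simp only [Matrix.mul_assoc]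
    rw [h5, hYX]
    have h6 : Vᵀ * (1 - Xᵀ * X) * V = Vᵀ * V - Vᵀ * (Xᵀ * X) * V := by
      rw [mul_sub, mul_one, sub_mul]
    rw [h6, hmid, hV1, ← diagonal_one, diagonal_sub]
    exact congrArg Matrix.diagonal (funext fun i => (hsin2 i).symm)
  obtain ⟨Op, hOp1, hOp2⟩ := gram_factor (X * V) Cmat hXVg
  obtain ⟨Oq, hOq1, hOq2⟩ := gram_factor (Y * V) Smat hYVg
  refine ⟨Op, Oq, Vᵀ, θ, hOp1, hOq1, ?_, ?_, ?_⟩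
  · rw [transpose_transpose]
    exact hV2
  · intro i j
    have hXeq : X = Op * Cmat * Vᵀ := by
      calc X = X * (V * Vᵀ) := by rw [hV2, Matrix.mul_one]
        _ = (X * V) * Vᵀ := by rw [Matrix.mul_assoc]
        _ = Op * Cmat * Vᵀ := by rw [hOp2]
    exact congrFun (congrFun hXeq i) j
  · intro i j
    have hYeq : Y = Oq * Smat * Vᵀ := by
      calc Y = Y * (V * Vᵀ) := by rw [hV2, Matrix.mul_one]
        _ = (Y * V) * Vᵀ := by rw [Matrix.mul_assoc]
        _ = Oq * Smat * Vᵀ := by rw [hOq2]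
    exact congrFun (congrFun hYeq i) j
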